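/- arXiv:0710.4544 — 5 statements merged into one kernel-verified Lean document; each statement's English description precedes it below -/
import Mathlib

section
/- Let (M,B) be a quadratic Malcev superalgebra, ω a homogeneous bilinear form of degree α on M, and φ the homogeneous endomorphism of degree α with ω(X,Y) = B(φ(X),Y). Then ω is a Malcev 2-cocycle on M (with values in K) if and only if φ is a skew-supersymmetric Malcev operator of M. -/
open scoped BigOperators

/-- The sign `(-1)^(x·y)` for degrees `x, y ∈ ℤ/2`. -/
def sgn (K : Type) [Field K] (x y : ZMod 2) : K := (-1 : K) ^ (x.val * y.val)

section Defs

variable (K : Type) [Field K] (V : Type) [AddCommGroup V] [Module K V]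

/-- `(g, mul)` is a Malcev superalgebra structure on `V`:  a `ℤ/2`-grading by submodules
which is a direct sum decomposition, such that the (bilinear) multiplication respects the
grading, is graded skew-symmetric (`XY = -(-1)^{xy} YX`) and satisfies the graded Malcev
identity. -/
def IsMalcevSuper (g : ZMod 2 → Submodule K V) (mul : V →ₗ[K] V →ₗ[K] V) : Prop :=
  DirectSum.IsInternal g ∧
    (∀ x y X Y, X ∈ g x → Y ∈ g y → mul X Y ∈ g (x + y)) ∧
    (∀ x y X Y, X ∈ g x → Y ∈ g y → mul X Y = -(sgn K x y) • mul Y X) ∧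
    (∀ x y z t X Y Z T, X ∈ g x → Y ∈ g y → Z ∈ g z → T ∈ g t →
      sgn K y z • mul (mul X Z) (mul Y T) =
        mul (mul (mul X Y) Z) T + sgn K x (y + z + t) • mul (mul (mul Y Z) T) X +
          sgn K (x + y) (z + t) • mul (mul (mul Z T) X) Y +
          sgn K t (x + y + z) • mul (mul (mul T X) Y) Z)

/-- `B` is an invariant scalar product: even, supersymmetric, non-degenerate, invariant. -/
def IsQuadratic (g : ZMod 2 → Submodule K V) (mul : V →ₗ[K] V →ₗ[K] V)
    (B : V →ₗ[K] V →ₗ[K] K) : Prop :=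
  (∀ x y X Y, X ∈ g x → Y ∈ g y → x ≠ y → B X Y = 0) ∧
    (∀ x y X Y, X ∈ g x → Y ∈ g y → B X Y = sgn K x y * B Y X) ∧
    (∀ X, (∀ Y, B X Y = 0) → X = 0) ∧
    (∀ X Y Z, B (mul X Y) Z = B X (mul Y Z))

/-- A linear endomorphism is homogeneous of degree `α`. -/
def IsHomogMap (g : ZMod 2 → Submodule K V) (α : ZMod 2) (φ : V →ₗ[K] V) : Prop :=
  ∀ x X, X ∈ g x → φ X ∈ g (x + α)

/-- Malcev operator identity for a homogeneous endomorphism `φ`. -/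
def IsMalcevOp (g : ZMod 2 → Submodule K V) (mul : V →ₗ[K] V →ₗ[K] V)
    (φ : V →ₗ[K] V) : Prop :=
  ∀ x y z X Y Z, X ∈ g x → Y ∈ g y → Z ∈ g z →
    φ (mul (mul X Y) Z) =
      mul (mul (φ X) Y) Z - sgn K x y • mul (φ Y) (mul X Z) -
        sgn K z (x + y) • mul (mul (φ Z) X) Y - sgn K x (y + z) • mul (φ (mul Y Z)) X

/-- `φ` (homogeneous of degree `α`) is skew-supersymmetric with respect to `B`. -/
def IsSkewSuper (g : ZMod 2 → Submodule K V) (B : V →ₗ[K] V →ₗ[K] K) (α : ZMod 2)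
    (φ : V →ₗ[K] V) : Prop :=
  ∀ x X Y, X ∈ g x → B (φ X) Y = -(sgn K α x) * B X (φ Y)

/-- Scalar-valued Malcev 2-cocycle. -/
def IsCocycle (g : ZMod 2 → Submodule K V) (mul : V →ₗ[K] V →ₗ[K] V)
    (ω : V →ₗ[K] V →ₗ[K] K) : Prop :=
  (∀ x y X Y, X ∈ g x → Y ∈ g y → ω X Y = -(sgn K x y) * ω Y X) ∧
    (∀ x y z t X Y Z T, X ∈ g x → Y ∈ g y → Z ∈ g z → T ∈ g t →
      sgn K y z * ω (mul X Z) (mul Y T) =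
        ω (mul (mul X Y) Z) T + sgn K x (y + z + t) * ω (mul (mul Y Z) T) X +
          sgn K (x + y) (z + t) * ω (mul (mul Z T) X) Y +
          sgn K t (x + y + z) * ω (mul (mul T X) Y) Z)

/-- The four compatibility conditions on an odd operator `D` and `A₀ ∈ M₀` entering the
generalized double extension. -/
def GDEConds (g : ZMod 2 → Submodule K V) (mul : V →ₗ[K] V →ₗ[K] V)
    (D : V →ₗ[K] V) (A0 : V) : Prop :=
  D (D A0) = (1 / 2 : K) • mul A0 A0 ∧
    (∀ X, D (mul A0 X) = mul A0 (D X) - mul (D A0) X) ∧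
    (∀ x y X Y, X ∈ g x → Y ∈ g y →
      mul (mul A0 X) Y =
        D (mul (D X) Y) + D (D (mul X Y)) + ((-1 : K) ^ x.val) • mul (D X) (D Y) +
          sgn K x y • mul (D (D Y)) X) ∧
    (∀ x y X Y, X ∈ g x → Y ∈ g y →
      mul A0 (mul X Y) =
        D (mul (D X) Y) + mul (D (D X)) Y -
          sgn K x y • (mul (D (D Y)) X + D (mul (D Y) X)))

/-- The grading of the generalized double extension `Ke ⊕ M ⊕ Ke*` (with `e`, `e*` odd),
realized on the carrier `K × V × K`. -/
def gdeGrading (g : ZMod 2 → Submodule K V) : ZMod 2 → Submodule K (K × V × K) := fun x =>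
  if x = 0 then (⊥ : Submodule K K).prod ((g 0).prod (⊥ : Submodule K K))
  else (⊤ : Submodule K K).prod ((g 1).prod (⊤ : Submodule K K))

/-- The multiplication of the generalized double extension `k = Ke ⊕ M ⊕ Ke*`:
`ee = A₀`, `eX = D(X) - (-1)^x B(X,A₀)e*`, `XY = (XY)_M - B(D(X),Y)e*`, `e* k = 0`
(and `Xe = -(-1)^x eX` by graded skew-symmetry), written out bilinearly on the
carrier `K × V × K` (coordinates: coefficient of `e`, element of `M`, coefficient of `e*`). -/
def GDEMulFormula (g : ZMod 2 → Submodule K V) (mul : V →ₗ[K] V →ₗ[K] V)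
    (B : V →ₗ[K] V →ₗ[K] K) (D : V →ₗ[K] V) (A0 : V)
    (mulE : (K × V × K) →ₗ[K] (K × V × K) →ₗ[K] (K × V × K)) : Prop :=
  ∀ (p q : ZMod 2) (a c b d : K) (X Y : V), X ∈ g p → Y ∈ g q →
    mulE (a, X, c) (b, Y, d) =
      (0, (a * b) • A0 + mul X Y + a • D Y - ((-1 : K) ^ p.val * b) • D X,
        -(a * (-1 : K) ^ q.val * B Y A0) + b * B X A0 - B (D X) Y)

/-- `B`-irreducibility: every graded ideal on which `B` is non-degenerate is trivial. -/
def BIrreducible (g : ZMod 2 → Submodule K V) (mul : V →ₗ[K] V →ₗ[K] V)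
    (B : V →ₗ[K] V →ₗ[K] K) : Prop :=
  ∀ I : Submodule K V, (∀ X ∈ I, ∀ Y, mul X Y ∈ I) →
    I = (I ⊓ g 0) ⊔ (I ⊓ g 1) →
    (∀ X ∈ I, (∀ Y ∈ I, B X Y = 0) → X = 0) → I = ⊥ ∨ I = ⊤

end Defs

lemma z2 : ∀ x : ZMod 2, x = 0 ∨ x = 1 := by decide
lemma v2 : ZMod.val (2 : ZMod 2) = 0 := rfl
lemma v3 : ZMod.val (3 : ZMod 2) = 1 := rfl
lemma v4 : ZMod.val (4 : ZMod 2) = 0 := rfl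
lemma v5 : ZMod.val (5 : ZMod 2) = 1 := rfl
lemma v6 : ZMod.val (6 : ZMod 2) = 0 := rfl

lemma sgn_sq (K : Type) [Field K] (x y : ZMod 2) : sgn K x y * sgn K x y = 1 := by
  rw [sgn, ← mul_pow]; norm_num

lemma sgn_ne_zero (K : Type) [Field K] (x y : ZMod 2) : sgn K x y ≠ 0 :=
  pow_ne_zero _ (neg_ne_zero.mpr one_ne_zero)

lemma sA1 (K : Type) [Field K] (x y a : ZMod 2) :
    sgn K a x * sgn K x (y + a) = sgn K x y := by
  rcases z2 x with rfl|rfl <;> rcases z2 y with rfl|rfl <;> rcases z2 a with rfl|rfl <;>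
    norm_num [sgn, v2, v3, v4, v5, v6, ZMod.val_one, ZMod.val_zero]

lemma sA2 (K : Type) [Field K] (x u a : ZMod 2) :
    sgn K x u * sgn K (u + a) x = sgn K a x := by
  rcases z2 x with rfl|rfl <;> rcases z2 u with rfl|rfl <;> rcases z2 a with rfl|rfl <;>
    norm_num [sgn, v2, v3, v4, v5, v6, ZMod.val_one, ZMod.val_zero]

lemma sL1 (K : Type) [Field K] (x y z t a : ZMod 2) :
    sgn K x (y+z+t) * sgn K (y+z+t+a) x * sgn K a x = 1 := by
  rcases z2 x with rfl|rfl <;> rcases z2 y with rfl|rfl <;> rcases z2 z with rfl|rfl <;>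
    rcases z2 t with rfl|rfl <;> rcases z2 a with rfl|rfl <;>
    norm_num [sgn, v2, v3, v4, v5, v6, ZMod.val_one, ZMod.val_zero]

lemma sL2 (K : Type) [Field K] (x y z t a : ZMod 2) :
    sgn K (x+y) (z+t) * sgn K (z+t+x+a) y * sgn K a y * sgn K (y+a+(z+t)) x * sgn K x (y+a)
      = sgn K x y := by
  rcases z2 x with rfl|rfl <;> rcases z2 y with rfl|rfl <;> rcases z2 z with rfl|rfl <;>
    rcases z2 t with rfl|rfl <;> rcases z2 a with rfl|rfl <;>
    norm_num [sgn, v2, v3, v4, v5, v6, ZMod.val_one, ZMod.val_zero]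

lemma sL3 (K : Type) [Field K] (x y z t a : ZMod 2) :
    sgn K t (x+y+z) * sgn K (t+x+y+a) z * sgn K a z * sgn K (z+a) (t+x+y) *
      sgn K t (x+(y+(z+a))) * sgn K y (z+a) * sgn K x (z+a+y)
      = sgn K x y * sgn K x z * sgn K y z := by
  rcases z2 x with rfl|rfl <;> rcases z2 y with rfl|rfl <;> rcases z2 z with rfl|rfl <;>
    rcases z2 t with rfl|rfl <;> rcases z2 a with rfl|rfl <;>
    norm_num [sgn, v2, v3, v4, v5, v6, ZMod.val_one, ZMod.val_zero]

lemma sr1 (K : Type) [Field K] (x y : ZMod 2) : sgn K x y * sgn K y x = 1 := by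
  rcases z2 x with rfl|rfl <;> rcases z2 y with rfl|rfl <;>
    norm_num [sgn, v2, v3, v4, v5, v6, ZMod.val_one, ZMod.val_zero]

lemma sr2 (K : Type) [Field K] (x y z : ZMod 2) :
    sgn K x y * sgn K z (y+x) = sgn K x y * sgn K x z * sgn K y z := by
  rcases z2 x with rfl|rfl <;> rcases z2 y with rfl|rfl <;> rcases z2 z with rfl|rfl <;>
    norm_num [sgn, v2, v3, v4, v5, v6, ZMod.val_one, ZMod.val_zero]

lemma sr3 (K : Type) [Field K] (x y z : ZMod 2) :
    sgn K x y * sgn K y (x+z) = sgn K y z := by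
  rcases z2 x with rfl|rfl <;> rcases z2 y with rfl|rfl <;> rcases z2 z with rfl|rfl <;>
    norm_num [sgn, v2, v3, v4, v5, v6, ZMod.val_one, ZMod.val_zero]

lemma key (K : Type) [Field K] (V : Type) [AddCommGroup V] [Module K V]
    (g : ZMod 2 → Submodule K V) (mul : V →ₗ[K] V →ₗ[K] V) (B : V →ₗ[K] V →ₗ[K] K)
    (hgrade : ∀ x y X Y, X ∈ g x → Y ∈ g y → mul X Y ∈ g (x + y))
    (hanti : ∀ x y X Y, X ∈ g x → Y ∈ g y → mul X Y = -(sgn K x y) • mul Y X)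
    (hsym : ∀ x y X Y, X ∈ g x → Y ∈ g y → B X Y = sgn K x y * B Y X)
    (hinv : ∀ X Y Z, B (mul X Y) Z = B X (mul Y Z))
    (α : ZMod 2) (ω : V →ₗ[K] V →ₗ[K] K) (φ : V →ₗ[K] V)
    (hφ : ∀ x X, X ∈ g x → φ X ∈ g (x + α))
    (hskew : ∀ x X Y, X ∈ g x → B (φ X) Y = -(sgn K α x) * B X (φ Y))
    (hrep : ∀ X Y, ω X Y = B (φ X) Y)
    (x y z t : ZMod 2) (X Y Z T : V)
    (hX : X ∈ g x) (hY : Y ∈ g y) (hZ : Z ∈ g z) (hT : T ∈ g t) :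
    ω (mul (mul X Y) Z) T + sgn K x (y+z+t) * ω (mul (mul Y Z) T) X
      + sgn K (x+y) (z+t) * ω (mul (mul Z T) X) Y
      + sgn K t (x+y+z) * ω (mul (mul T X) Y) Z
      - sgn K y z * ω (mul X Z) (mul Y T)
    = -(sgn K x y) * B (φ (mul (mul Y X) Z) - mul (mul (φ Y) X) Z
        + sgn K y x • mul (φ X) (mul Y Z) + sgn K z (y+x) • mul (mul (φ Z) Y) X
        + sgn K y (x+z) • mul (φ (mul X Z)) Y) T := by
  have hflip : ∀ (u : ZMod 2) (U W : V), U ∈ g u →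
      B U (φ W) = -(sgn K α u) * B (φ U) W := by
    intro u U W hU
    have h := hskew u U W hU
    have hs := sgn_sq K α u
    linear_combination (sgn K α u) * h - (B U (φ W)) * hs
  have h1 : ω (mul (mul X Y) Z) T = -(sgn K x y) * B (φ (mul (mul Y X) Z)) T := by
    rw [hrep, hanti x y X Y hX hY]
    simp only [map_smul, map_neg, neg_smul, LinearMap.smul_apply, LinearMap.neg_apply,
      smul_eq_mul, neg_mul, mul_neg, neg_neg]
  have h2 : sgn K x (y+z+t) * ω (mul (mul Y Z) T) X
      = -(B (mul (φ X) (mul Y Z)) T) := by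
    have mW : mul (mul Y Z) T ∈ g (y+z+t) := hgrade (y+z) t _ _ (hgrade y z _ _ hY hZ) hT
    have e2 := hsym (y+z+t+α) x _ X (hφ (y+z+t) _ mW) hX
    have e3 := hflip x X (mul (mul Y Z) T) hX
    have e4 := hinv (φ X) (mul Y Z) T
    rw [hrep, e2, e3, ← e4]
    linear_combination (-(B (mul (φ X) (mul Y Z)) T)) * sL1 K x y z t α
  have h3 : sgn K (x+y) (z+t) * ω (mul (mul Z T) X) Y
      = sgn K x y * B (mul (mul (φ Y) X) Z) T := by
    have mZT : mul Z T ∈ g (z+t) := hgrade z t _ _ hZ hT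
    have mW : mul (mul Z T) X ∈ g (z+t+x) := hgrade (z+t) x _ _ mZT hX
    have e2 := hsym (z+t+x+α) y _ Y (hφ (z+t+x) _ mW) hY
    have e3 := hflip y Y (mul (mul Z T) X) hY
    have e4 := hinv (φ Y) (mul Z T) X
    have m5 : mul (φ Y) (mul Z T) ∈ g (y+α+(z+t)) :=
      hgrade (y+α) (z+t) _ _ (hφ y Y hY) mZT
    have e5 := hsym (y+α+(z+t)) x _ X m5 hX
    have e6 := hinv X (φ Y) (mul Z T)
    have e7 := hinv (mul X (φ Y)) Z T
    have e8 : B (mul (mul X (φ Y)) Z) T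
        = -(sgn K x (y+α)) * B (mul (mul (φ Y) X) Z) T := by
      rw [hanti x (y+α) X (φ Y) hX (hφ y Y hY)]
      simp only [map_smul, map_neg, neg_smul, LinearMap.smul_apply, LinearMap.neg_apply,
        smul_eq_mul, neg_mul, mul_neg, neg_neg]
    rw [hrep, e2, e3, ← e4, e5, ← e6, ← e7, e8]
    linear_combination (B (mul (mul (φ Y) X) Z) T) * sL2 K x y z t α
  have h4 : sgn K t (x+y+z) * ω (mul (mul T X) Y) Z
      = -(sgn K x y * sgn K x z * sgn K y z) * B (mul (mul (φ Z) Y) X) T := by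
    have mW : mul (mul T X) Y ∈ g (t+x+y) := hgrade (t+x) y _ _ (hgrade t x _ _ hT hX) hY
    have e2 := hsym (t+x+y+α) z _ Z (hφ (t+x+y) _ mW) hZ
    have e3 := hflip z Z (mul (mul T X) Y) hZ
    have e4 := hsym (z+α) (t+x+y) (φ Z) _ (hφ z Z hZ) mW
    have e5 := hinv (mul T X) Y (φ Z)
    have e6 := hinv T X (mul Y (φ Z))
    have m7 : mul X (mul Y (φ Z)) ∈ g (x+(y+(z+α))) :=
      hgrade x (y+(z+α)) _ _ hX (hgrade y (z+α) _ _ hY (hφ z Z hZ))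
    have e7 := hsym t (x+(y+(z+α))) T _ hT m7
    have e8 : B (mul X (mul Y (φ Z))) T
        = (sgn K y (z+α) * sgn K x (z+α+y)) * B (mul (mul (φ Z) Y) X) T := by
      rw [hanti y (z+α) Y (φ Z) hY (hφ z Z hZ)]
      simp only [map_smul, map_neg, neg_smul, LinearMap.smul_apply, LinearMap.neg_apply,
        smul_eq_mul, neg_mul, mul_neg, neg_neg]
      rw [hanti x (z+α+y) X (mul (φ Z) Y) hX (hgrade (z+α) y _ _ (hφ z Z hZ) hY)]
      simp only [map_smul, map_neg, neg_smul, LinearMap.smul_apply, LinearMap.neg_apply,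
        smul_eq_mul, neg_mul, mul_neg, neg_neg]
      ring
    rw [hrep, e2, e3, e4, e5, e6, e7, e8]
    linear_combination (-(B (mul (mul (φ Z) Y) X) T)) * sL3 K x y z t α
  have h5 : sgn K y z * ω (mul X Z) (mul Y T)
      = sgn K y z * B (mul (φ (mul X Z)) Y) T := by
    rw [hrep, hinv (φ (mul X Z)) Y T]
  have h6 : B (φ (mul (mul Y X) Z) - mul (mul (φ Y) X) Z
        + sgn K y x • mul (φ X) (mul Y Z) + sgn K z (y+x) • mul (mul (φ Z) Y) X
        + sgn K y (x+z) • mul (φ (mul X Z)) Y) T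
      = B (φ (mul (mul Y X) Z)) T - B (mul (mul (φ Y) X) Z) T
        + sgn K y x * B (mul (φ X) (mul Y Z)) T
        + sgn K z (y+x) * B (mul (mul (φ Z) Y) X) T
        + sgn K y (x+z) * B (mul (φ (mul X Z)) Y) T := by
    simp only [map_add, map_sub, map_smul, LinearMap.add_apply, LinearMap.sub_apply,
      LinearMap.smul_apply, smul_eq_mul]
  linear_combination h1 + h2 + h3 + h4 - h5 + sgn K x y * h6
    + (B (mul (φ X) (mul Y Z)) T) * sr1 K x y
    + (B (mul (mul (φ Z) Y) X) T) * sr2 K x y z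
    + (B (mul (φ (mul X Z)) Y) T) * sr3 K x y z


lemma exists_decomp (K : Type) [Field K] (V : Type) [AddCommGroup V] [Module K V]
    (g : ZMod 2 → Submodule K V) (hint : DirectSum.IsInternal g) :
    ∀ T : V, ∃ T0 ∈ g 0, ∃ T1 ∈ g 1, T = T0 + T1 := by
  have htop : g 0 ⊔ g 1 = ⊤ := by
    refine le_antisymm le_top ?_
    rw [← hint.submodule_iSup_eq_top]
    refine iSup_le fun i => ?_
    rcases z2 i with rfl|rfl
    · exact le_sup_left
    · exact le_sup_right
  intro T
  have hmem : T ∈ g 0 ⊔ g 1 := by rw [htop]; exact Submodule.mem_top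
  obtain ⟨T0, h0, T1, h1, hT⟩ := Submodule.mem_sup.mp hmem
  exact ⟨T0, h0, T1, h1, hT.symm⟩

theorem stmt2 (K : Type) [Field K] [CharZero K] [IsAlgClosed K]
    (V : Type) [AddCommGroup V] [Module K V] [FiniteDimensional K V]
    (g : ZMod 2 → Submodule K V) (mul : V →ₗ[K] V →ₗ[K] V) (B : V →ₗ[K] V →ₗ[K] K)
    (hM : IsMalcevSuper K V g mul) (hQ : IsQuadratic K V g mul B)
    (α : ZMod 2) (ω : V →ₗ[K] V →ₗ[K] K)
    (hω : ∀ x y X Y, X ∈ g x → Y ∈ g y → x + y ≠ α → ω X Y = 0)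
    (φ : V →ₗ[K] V) (hφ : IsHomogMap K V g α φ)
    (hrep : ∀ X Y, ω X Y = B (φ X) Y) :
    IsCocycle K V g mul ω ↔ (IsMalcevOp K V g mul φ ∧ IsSkewSuper K V g B α φ) := by
  obtain ⟨hint, hgrade, hanti, -⟩ := hM
  obtain ⟨-, hsym, hnondeg, hinv⟩ := hQ
  have hdecomp := exists_decomp K V g hint
  constructor
  · rintro ⟨hc1, hc2⟩
    have hskew : IsSkewSuper K V g B α φ := by
      intro x X Yv hX
      have hhom : ∀ (u : ZMod 2) (U : V), U ∈ g u →
          B (φ X) U = -(sgn K α x) * B X (φ U) := by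
        intro u U hU
        have e1 := hc1 x u X U hX hU
        have e2 := hsym (u+α) x (φ U) X (hφ u U hU) hX
        rw [hrep X U, hrep U X] at e1
        rw [e1, e2]
        linear_combination (-(B X (φ U))) * sA2 K x u α
      obtain ⟨T0, h0, T1, h1, rfl⟩ := hdecomp Yv
      have q0 := hhom 0 T0 h0
      have q1 := hhom 1 T1 h1
      rw [map_add, map_add, map_add, q0, q1]
      ring
    refine ⟨?_, hskew⟩
    intro x y z X Y Z hX hY hZ
    have hUT : ∀ (t : ZMod 2) (T : V), T ∈ g t →
        B (φ (mul (mul X Y) Z) - mul (mul (φ X) Y) Z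
          + sgn K x y • mul (φ Y) (mul X Z) + sgn K z (x+y) • mul (mul (φ Z) X) Y
          + sgn K x (y+z) • mul (φ (mul Y Z)) X) T = 0 := by
      intro t T hT
      have hk := key K V g mul B hgrade hanti hsym hinv α ω φ hφ hskew hrep
        y x z t Y X Z T hY hX hZ hT
      have hcc := hc2 y x z t Y X Z T hY hX hZ hT
      have h0 : -(sgn K y x) * B (φ (mul (mul X Y) Z) - mul (mul (φ X) Y) Z
          + sgn K x y • mul (φ Y) (mul X Z) + sgn K z (x+y) • mul (mul (φ Z) X) Y
          + sgn K x (y+z) • mul (φ (mul Y Z)) X) T = 0 := by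
        rw [← hk]; linear_combination -hcc
      rcases mul_eq_zero.mp h0 with h|h
      · exact absurd (neg_eq_zero.mp h) (sgn_ne_zero K y x)
      · exact h
    have hU0 : φ (mul (mul X Y) Z) - mul (mul (φ X) Y) Z
        + sgn K x y • mul (φ Y) (mul X Z) + sgn K z (x+y) • mul (mul (φ Z) X) Y
        + sgn K x (y+z) • mul (φ (mul Y Z)) X = 0 := by
      apply hnondeg
      intro Yv
      obtain ⟨T0, h0, T1, h1, rfl⟩ := hdecomp Yv
      rw [map_add, hUT 0 T0 h0, hUT 1 T1 h1, add_zero]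
    have hsub : φ (mul (mul X Y) Z) - (mul (mul (φ X) Y) Z
        - sgn K x y • mul (φ Y) (mul X Z) - sgn K z (x+y) • mul (mul (φ Z) X) Y
        - sgn K x (y+z) • mul (φ (mul Y Z)) X)
        = φ (mul (mul X Y) Z) - mul (mul (φ X) Y) Z
          + sgn K x y • mul (φ Y) (mul X Z) + sgn K z (x+y) • mul (mul (φ Z) X) Y
          + sgn K x (y+z) • mul (φ (mul Y Z)) X := by
      module
    rw [hU0] at hsub
    exact sub_eq_zero.mp hsub
  · rintro ⟨hop, hskew⟩
    constructor
    · intro x y X Y hX hY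
      have e2 := hsym x (y+α) X (φ Y) hX (hφ y Y hY)
      rw [hrep X Y, hrep Y X, hskew x X Y hX, e2]
      linear_combination (-(B (φ Y) X)) * sA1 K x y α
    · intro x y z t X Y Z T hX hY hZ hT
      have hk := key K V g mul B hgrade hanti hsym hinv α ω φ hφ hskew hrep
        x y z t X Y Z T hX hY hZ hT
      have hU0 : φ (mul (mul Y X) Z) - mul (mul (φ Y) X) Z
          + sgn K y x • mul (φ X) (mul Y Z) + sgn K z (y+x) • mul (mul (φ Z) Y) X
          + sgn K y (x+z) • mul (φ (mul X Z)) Y = 0 := by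
        rw [hop y x z Y X Z hY hX hZ]; module
      rw [hU0, map_zero, LinearMap.zero_apply, mul_zero] at hk
      linear_combination -hk
end

section
/- Let (M,B) be a quadratic Malcev superalgebra, D an odd skew-supersymmetric Malcev operator, and A_0 ∈ M_0 satisfying D²(A_0) = (1/2)A_0A_0, D(A_0X) = A_0D(X) - D(A_0)X, (A_0X)Y = D(D(X)Y) + D²(XY) + (-1)^{x}D(X)D(Y) + (-1)^{xy}D²(Y)X, and A_0(XY) = D(D(X)Y) + D²(X)Y - (-1)^{xy}{D²(Y)X + D(D(Y)X)} for all homogeneous X,Y. Then the map D̃ on M ⊕ K e* (with e* odd, central) defined by D̃(e*) = 0 and D̃(X) = D(X) - (-1)^{x}B(X,A_0)e* is a Malcev operator of the central extension M ⊕ K e*. -/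
open scoped BigOperators

/-! Since `e*` is central, the `M`-component of the Malcev operator identity for `D̃` is that of
`D`, and its `e*`-component is a scalar identity. By invariance and evenness of `B`, its left side
`(-1)^{x+y+z} B((XY)Z, A₀)` equals `B(A₀(XY), Z)`, which the last condition on `A₀` expands;
skew-supersymmetry of `D` moves the operators across `B` and matches the remaining terms. -/

theorem ZMod.two_eq_zero_or_eq_one (w : ZMod 2) : w = 0 ∨ w = 1 := by decide +revert

section Sign

variable (K : Type) [Field K]

@[simp] theorem sgn_zero_left (y : ZMod 2) : sgn K 0 y = 1 := by simp [sgn]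

@[simp] theorem sgn_zero_right (x : ZMod 2) : sgn K x 0 = 1 := by simp [sgn]

@[simp] theorem sgn_one_one : sgn K 1 1 = -1 := by simp [sgn, ZMod.val_one]

theorem sgn_comm (x y : ZMod 2) : sgn K x y = sgn K y x := by rw [sgn, sgn, mul_comm]

theorem sgn_mul_self (x y : ZMod 2) : sgn K x y * sgn K x y = 1 := by
  rw [sgn, ← pow_add, Even.neg_one_pow ⟨_, rfl⟩]

theorem sgn_add_right (x y z : ZMod 2) : sgn K x (y + z) = sgn K x y * sgn K x z := by
  rcases x.two_eq_zero_or_eq_one with rfl | rfl <;>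
  rcases y.two_eq_zero_or_eq_one with rfl | rfl <;>
  rcases z.two_eq_zero_or_eq_one with rfl | rfl <;> simp [show (1 : ZMod 2) + 1 = 0 from rfl]

end Sign

section Quadratic

variable {K : Type} [Field K] {V : Type} [AddCommGroup V] [Module K V]
  {g : ZMod 2 → Submodule K V} {mul : V →ₗ[K] V →ₗ[K] V} {B : V →ₗ[K] V →ₗ[K] K}

theorem IsHomogMap.apply_apply_mem {α : ZMod 2} {φ : V →ₗ[K] V} (hφ : IsHomogMap K V g α φ)
    {x : ZMod 2} {X : V} (hX : X ∈ g x) : φ (φ X) ∈ g x := by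
  simpa [add_assoc, CharTwo.add_self_eq_zero] using hφ _ _ (hφ x X hX)

theorem IsSkewSuper.apply_apply_left {α : ZMod 2} {φ : V →ₗ[K] V} (hφ : IsHomogMap K V g α φ)
    (hsk : IsSkewSuper K V g B α φ) {x : ZMod 2} {X : V} (hX : X ∈ g x) (Y : V) :
    B (φ (φ X)) Y = sgn K α α * B X (φ (φ Y)) := by
  rw [hsk _ _ _ (hφ x X hX), hsk x X _ hX, sgn_add_right]
  linear_combination (sgn K α α * B X (φ (φ Y))) * sgn_mul_self K α x

theorem IsQuadratic.neg_one_pow_mul_apply_of_mem_zero (hQ : IsQuadratic K V g mul B)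
    {w : ZMod 2} {W A : V} (hW : W ∈ g w) (hA : A ∈ g 0) :
    (-1 : K) ^ w.val * B W A = B A W := by
  rcases w.two_eq_zero_or_eq_one with rfl | rfl
  · simpa using (hQ.2.1 0 0 A W hA hW).symm
  · simp [hQ.1 1 0 W A hW hA one_ne_zero, hQ.1 0 1 A W hA hW zero_ne_one]

theorem IsSkewSuper.apply_mul_left (hM : IsMalcevSuper K V g mul) (hQ : IsQuadratic K V g mul B)
    {α : ZMod 2} {φ : V →ₗ[K] V} (hsk : IsSkewSuper K V g B α φ) {u x : ZMod 2} {U X : V}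
    (hU : U ∈ g u) (hX : X ∈ g x) (Z : V) :
    B (φ (mul U X)) Z = sgn K α (u + x) * sgn K u x * B X (mul U (φ Z)) := by
  rw [hsk _ _ _ (hM.2.1 u x U X hU hX), hM.2.2.1 u x U X hU hX, map_smul,
    LinearMap.smul_apply, smul_eq_mul, hQ.2.2.2]
  ring

theorem IsSkewSuper.sgn_mul_apply_mul_apply_swap (hM : IsMalcevSuper K V g mul)
    (hQ : IsQuadratic K V g mul B) {D : V →ₗ[K] V} (hD1 : IsHomogMap K V g 1 D)
    (hDsk : IsSkewSuper K V g B 1 D) {x y z : ZMod 2} {X Y Z : V}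
    (hX : X ∈ g x) (hY : Y ∈ g y) (hZ : Z ∈ g z) :
    sgn K x y * B (D (mul (D Y) X)) Z = sgn K z (x + y) * B (D (mul (D Z) X)) Y := by
  -- both sides are `±B(X, D(Y)D(Z))`
  have hsign : sgn K x y * (sgn K 1 (y + 1 + x) * sgn K (y + 1) x) =
      -(sgn K z (x + y) * (sgn K 1 (z + 1 + x) * sgn K (z + 1) x) * sgn K (z + 1) (y + 1)) := by
    rcases x.two_eq_zero_or_eq_one with rfl | rfl <;>
    rcases y.two_eq_zero_or_eq_one with rfl | rfl <;>
    rcases z.two_eq_zero_or_eq_one with rfl | rfl <;> simp [show (1 : ZMod 2) + 1 = 0 from rfl]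
  rw [hDsk.apply_mul_left hM hQ (hD1 y Y hY) hX, hDsk.apply_mul_left hM hQ (hD1 z Z hZ) hX,
    hM.2.2.1 _ _ _ _ (hD1 z Z hZ) (hD1 y Y hY), map_smul, smul_eq_mul]
  linear_combination B X (mul (D Y) (D Z)) * hsign

theorem GDEConds.neg_one_pow_mul_apply_mul_mul_A0 (hM : IsMalcevSuper K V g mul)
    (hQ : IsQuadratic K V g mul B) {D : V →ₗ[K] V} (hD1 : IsHomogMap K V g 1 D)
    (hDsk : IsSkewSuper K V g B 1 D) {A0 : V} (hA0 : A0 ∈ g 0)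
    (hconds : GDEConds K V g mul D A0) {x y z : ZMod 2} {X Y Z : V}
    (hX : X ∈ g x) (hY : Y ∈ g y) (hZ : Z ∈ g z) :
    (-1 : K) ^ (x + y + z).val * B (mul (mul X Y) Z) A0 =
      B (D (mul (D X) Y)) Z - sgn K x y * B (D (D Y)) (mul X Z) -
        sgn K z (x + y) * B (D (mul (D Z) X)) Y - sgn K x (y + z) * B (D (D (mul Y Z))) X := by
  have hXY := hM.2.1 x y X Y hX hY
  have hYZ := hM.2.1 y z Y Z hY hZ
  have hA0_mul : B (mul A0 (mul X Y)) Z = B (D (mul (D X) Y)) Z + B (D (D X)) (mul Y Z) -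
      sgn K x y * (B (D (D Y)) (mul X Z) + B (D (mul (D Y) X)) Z) := by
    rw [hconds.2.2.2 x y X Y hX hY, ← hQ.2.2.2 (D (D X)), ← hQ.2.2.2 (D (D Y))]
    simp only [map_add, map_sub, map_smul, LinearMap.add_apply, LinearMap.sub_apply,
      LinearMap.smul_apply, smul_eq_mul]
  have hDDX : B (D (D X)) (mul Y Z) = -B X (D (D (mul Y Z))) := by
    rw [hDsk.apply_apply_left hD1 hX, sgn_one_one, neg_one_mul]
  have hDDYZ : sgn K x (y + z) * B (D (D (mul Y Z))) X = B X (D (D (mul Y Z))) := by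
    rw [hQ.2.1 _ _ _ _ (hD1.apply_apply_mem hYZ) hX, sgn_comm K (y + z), ← mul_assoc,
      sgn_mul_self, one_mul]
  rw [hQ.neg_one_pow_mul_apply_of_mem_zero (hM.2.1 _ _ _ _ hXY hZ) hA0, ← hQ.2.2.2, hA0_mul, hDDX]
  linear_combination hDDYZ - hDsk.sgn_mul_apply_mul_apply_swap hM hQ hD1 hX hY hZ

end Quadratic

theorem LinearMap.apply_mk_eq_apply_mk_zero {R M N : Type*} [CommSemiring R] [AddCommMonoid M]
    [Module R M] [AddCommMonoid N] [Module R N] (f : M × R →ₗ[R] N) (hf : f (0, 1) = 0)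
    (m : M) (c : R) : f (m, c) = f (m, 0) := by
  have hmc : ((m, c) : M × R) = (m, 0) + c • (0, 1) := by simp
  rw [hmc, map_add, map_smul, hf, smul_zero, add_zero]

theorem fst_mem_of_mem_ite {K V : Type} [Field K] [AddCommGroup V] [Module K V]
    {g : ZMod 2 → Submodule K V} {w : ZMod 2} {P : V × K}
    (hP : P ∈ if w = 0 then (g 0).prod (⊥ : Submodule K K) else (g 1).prod ⊤) : P.1 ∈ g w := by
  rcases w.two_eq_zero_or_eq_one with rfl | rfl
  · exact hP.1
  · exact hP.1

theorem stmt6_general (K : Type) [Field K]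
    (V : Type) [AddCommGroup V] [Module K V]
    (g : ZMod 2 → Submodule K V) (mul : V →ₗ[K] V →ₗ[K] V) (B : V →ₗ[K] V →ₗ[K] K)
    (hM : IsMalcevSuper K V g mul) (hQ : IsQuadratic K V g mul B)
    (D : V →ₗ[K] V) (hD1 : IsHomogMap K V g 1 D)
    (hDop : IsMalcevOp K V g mul D) (hDsk : IsSkewSuper K V g B 1 D)
    (A0 : V) (hA0 : A0 ∈ g 0) (hconds : GDEConds K V g mul D A0)
    (mulE : (V × K) →ₗ[K] (V × K) →ₗ[K] (V × K))
    (hmulE : ∀ (X Y : V) (a b : K), mulE (X, a) (Y, b) = (mul X Y, -(B (D X) Y)))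
    (Dt : (V × K) →ₗ[K] (V × K))
    (hDt0 : Dt (0, 1) = 0)
    (hDt : ∀ x X, X ∈ g x → Dt (X, 0) = (D X, -((-1 : K) ^ x.val * B X A0))) :
    IsMalcevOp K (V × K)
      (fun x => if x = 0 then (g 0).prod (⊥ : Submodule K K) else (g 1).prod (⊤ : Submodule K K))
      mulE Dt := by
  rintro x y z ⟨X, a⟩ ⟨Y, b⟩ ⟨Z, c⟩ hXa hYb hZc
  have hX : X ∈ g x := fst_mem_of_mem_ite hXa
  have hY : Y ∈ g y := fst_mem_of_mem_ite hYb
  have hZ : Z ∈ g z := fst_mem_of_mem_ite hZc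
  have hDt_mk : ∀ w W c, W ∈ g w → Dt (W, c) = (D W, -((-1 : K) ^ w.val * B W A0)) :=
    fun w W c hW => (Dt.apply_mk_eq_apply_mk_zero hDt0 W c).trans (hDt w W hW)
  simp only [hmulE]
  rw [hDt_mk x X a hX, hDt_mk y Y b hY, hDt_mk z Z c hZ,
    hDt_mk _ _ _ (hM.2.1 _ _ _ _ (hM.2.1 x y X Y hX hY) hZ), hDt_mk _ _ _ (hM.2.1 y z Y Z hY hZ)]
  simp only [Prod.smul_mk, Prod.mk_sub_mk, smul_eq_mul, Prod.mk.injEq]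
  refine ⟨hDop x y z X Y Z hX hY hZ, ?_⟩
  rw [hconds.neg_one_pow_mul_apply_mul_mul_A0 hM hQ hD1 hDsk hA0 hX hY hZ]
  ring

/-- the map `D̃` with `D̃(e*) = 0`, `D̃(X) = D(X) - (-1)^x B(X,A₀) e*` is a
Malcev operator of the central extension `M ⊕ Ke*`. -/
theorem stmt6 (K : Type) [Field K] [CharZero K] [IsAlgClosed K]
    (V : Type) [AddCommGroup V] [Module K V] [FiniteDimensional K V]
    (g : ZMod 2 → Submodule K V) (mul : V →ₗ[K] V →ₗ[K] V) (B : V →ₗ[K] V →ₗ[K] K)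
    (hM : IsMalcevSuper K V g mul) (hQ : IsQuadratic K V g mul B)
    (D : V →ₗ[K] V) (hD1 : IsHomogMap K V g 1 D)
    (hDop : IsMalcevOp K V g mul D) (hDsk : IsSkewSuper K V g B 1 D)
    (A0 : V) (hA0 : A0 ∈ g 0) (hconds : GDEConds K V g mul D A0)
    (mulE : (V × K) →ₗ[K] (V × K) →ₗ[K] (V × K))
    (hmulE : ∀ (X Y : V) (a b : K), mulE (X, a) (Y, b) = (mul X Y, -(B (D X) Y)))
    (Dt : (V × K) →ₗ[K] (V × K))
    (hDt0 : Dt (0, 1) = 0)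
    (hDt : ∀ x X, X ∈ g x → Dt (X, 0) = (D X, -((-1 : K) ^ x.val * B X A0))) :
    IsMalcevOp K (V × K)
      (fun x => if x = 0 then (g 0).prod (⊥ : Submodule K K) else (g 1).prod (⊤ : Submodule K K))
      mulE Dt :=
  stmt6_general K V g mul B hM hQ D hD1 hDop hDsk A0 hA0 hconds mulE hmulE Dt hDt0 hDt
end

section
/- In the generalized double extension k = K e ⊕ M ⊕ K e* of the example (with ee = a, v_iv_j = δ_{ij}a, ev_i = m_i a, ae = Σ m_i y_i - e*, av_i = y_i - m_i e*, e*k = y_i k = 0), the odd part k_1 is NOT a completely reducible module over the even part k_0; that is, there is no k_0-submodule X of k_1 with k_1 = X ⊕ Y where Y = span{y_1,...,y_n,e*}. -/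
open scoped BigOperators

/-- in the generalized double extension of the example, the odd part
`k₁ = span{e, v₁,…,vₙ, y₁,…,yₙ, e*}` is not a completely reducible module over
`k₀ = span{a}`: there is no `k₀`-submodule `X` of `k₁` with `k₁ = X ⊕ Y`,
`Y = span{y₁,…,yₙ,e*}`.  The carrier of `k₁` is `K × (Fin n → K) × (Fin n → K) × K`
(coordinates: `e`, the `vᵢ`, the `yᵢ`, `e*`), and `a` acts by
`a·e = Σ mᵢ yᵢ - e*`, `a·vᵢ = yᵢ - mᵢ e*`, `a·yᵢ = a·e* = 0`. -/
theorem stmt11 (K : Type) [Field K] [CharZero K] [IsAlgClosed K] (n : ℕ)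
    (m : Fin n → K) (hm : ∀ i, m i ≠ 0)
    (A : (K × (Fin n → K) × (Fin n → K) × K) →ₗ[K] (K × (Fin n → K) × (Fin n → K) × K))
    (hA : ∀ (e0 c : K) (v y : Fin n → K),
      A (e0, v, y, c) = (0, (0 : Fin n → K), e0 • m + v, -(e0 + ∑ i, m i * v i))) :
    ¬ ∃ X : Submodule K (K × (Fin n → K) × (Fin n → K) × K),
        (∀ u ∈ X, A u ∈ X) ∧
        IsCompl X ((⊥ : Submodule K K).prod ((⊥ : Submodule K (Fin n → K)).prod
          (⊤ : Submodule K ((Fin n → K) × K)))) := by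
  rintro ⟨X, hInv, hCompl⟩
  set Y : Submodule K (K × (Fin n → K) × (Fin n → K) × K) :=
    (⊥ : Submodule K K).prod ((⊥ : Submodule K (Fin n → K)).prod
      (⊤ : Submodule K ((Fin n → K) × K))) with hY
  -- write (1,0,0,0) = x + y with x ∈ X, y ∈ Y
  have htop : ((1 : K), (0 : Fin n → K), (0 : Fin n → K), (0 : K)) ∈ X ⊔ Y := by
    rw [hCompl.codisjoint.eq_top]; trivial
  rw [Submodule.mem_sup] at htop
  obtain ⟨x, hx, y, hy, hxy⟩ := htop
  obtain ⟨hy1, hy2, -⟩ := hy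
  replace hy1 : y.1 = 0 := hy1
  replace hy2 : y.2.1 = 0 := hy2
  -- A x lies in Y (image of A is in Y) and in X, hence is 0
  have hAxX : A x ∈ X := hInv x hx
  have hAxY : A x ∈ Y := by
    obtain ⟨e0, v, yy, c⟩ := x
    rw [hA]
    exact ⟨rfl, rfl, trivial⟩
  have hAx0 : A x = 0 := by
    have := hCompl.disjoint
    rw [Submodule.disjoint_def] at this
    exact this _ hAxX hAxY
  -- compute A x : x = (1, 0, *, *)
  have hx1 : x.1 = 1 := by
    have := congrArg Prod.fst hxy
    simpa [hy1] using this
  have hx2 : x.2.1 = 0 := by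
    have := congrArg (fun u => u.2.1) hxy
    simpa [hy2] using this
  have hcalc : A x = (0, (0 : Fin n → K), m, -1) := by
    have hx' : x = (1, 0, x.2.2.1, x.2.2.2) := by
      ext <;> simp [hx1, hx2]
    rw [hx', hA]
    simp
  rw [hcalc] at hAx0
  have : (-1 : K) = 0 := congrArg (fun u => u.2.2.2) hAx0
  simpa using this
end

section
/- Let (M,B) be a B-irreducible quadratic Malcev superalgebra with dim M > 1, and let e* be a nonzero element of z(M) ∩ M_1. Choose e ∈ M_1 with B(e*,e) = 1 and let N be the orthogonal complement of A = Ke* ⊕ Ke with respect to B. Then N with the multiplication α(X,Y) := projection of XY onto N is a Malcev superalgebra, and B restricted to N × N is an invariant scalar product on N. -/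
open scoped BigOperators

/-- if `(M,B)` is `B`-irreducible quadratic with `dim M > 1`,
`e* ∈ z(M) ∩ M₁` nonzero, `e ∈ M₁` with `B(e*,e) = 1`, and `N = (Ke* ⊕ Ke)^⊥`, then `N`
with the `N`-component `α(X,Y)` of the product is a Malcev superalgebra and the
restriction of `B` is an invariant scalar product on `N`. -/
theorem stmt12 (K : Type) [Field K] [CharZero K] [IsAlgClosed K]
    (V : Type) [AddCommGroup V] [Module K V] [FiniteDimensional K V]
    (g : ZMod 2 → Submodule K V) (mul : V →ₗ[K] V →ₗ[K] V) (B : V →ₗ[K] V →ₗ[K] K)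
    (hM : IsMalcevSuper K V g mul) (hQ : IsQuadratic K V g mul B)
    (hirr : BIrreducible K V g mul B) (hdim : 1 < Module.finrank K V)
    (estar : V) (hes1 : estar ∈ g 1) (hes0 : estar ≠ 0) (hesz : ∀ Y, mul estar Y = 0)
    (e : V) (he1 : e ∈ g 1) (hee : B estar e = 1)
    (N : Submodule K V) (hN : ∀ X, X ∈ N ↔ (B X e = 0 ∧ B X estar = 0))
    (alpha : V → V → V) (phi : V → V → K)
    (halpha : ∀ X Y, X ∈ N → Y ∈ N →
      alpha X Y ∈ N ∧ mul X Y = alpha X Y + phi X Y • estar) :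
    -- graded skew-symmetry of α on N
    (∀ x y X Y, X ∈ N → Y ∈ N → X ∈ g x → Y ∈ g y →
        alpha X Y = -(sgn K x y) • alpha Y X) ∧
    -- graded Malcev identity for α on N
    (∀ x y z t X Y Z T, X ∈ N → Y ∈ N → Z ∈ N → T ∈ N →
        X ∈ g x → Y ∈ g y → Z ∈ g z → T ∈ g t →
        sgn K y z • alpha (alpha X Z) (alpha Y T) =
          alpha (alpha (alpha X Y) Z) T +
            sgn K x (y + z + t) • alpha (alpha (alpha Y Z) T) X +
            sgn K (x + y) (z + t) • alpha (alpha (alpha Z T) X) Y +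
            sgn K t (x + y + z) • alpha (alpha (alpha T X) Y) Z) ∧
    -- B restricted to N is non-degenerate
    (∀ X ∈ N, (∀ Y ∈ N, B X Y = 0) → X = 0) ∧
    -- B restricted to N is invariant for α
    (∀ X Y Z, X ∈ N → Y ∈ N → Z ∈ N → B (alpha X Y) Z = B X (alpha Y Z)) := by
  obtain ⟨hint, hgrade, hskew, hmalcev⟩ := hM
  obtain ⟨heven, hsym, hnd, hinv⟩ := hQ
  -- every element decomposes into even and odd parts
  have hcases : ∀ j : ZMod 2, j = 0 ∨ j = 1 := by decide
  have hdecomp : ∀ Z : V, ∃ Z0 ∈ g 0, ∃ Z1 ∈ g 1, Z = Z0 + Z1 := by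
    intro Z
    have htop : g 0 ⊔ g 1 = ⊤ := by
      have h := hint.submodule_iSup_eq_top
      refine le_antisymm le_top ?_
      rw [← h]
      refine iSup_le fun i => ?_
      rcases hcases i with h' | h' <;> subst h'
      · exact le_sup_left
      · exact le_sup_right
    have hZ : Z ∈ g 0 ⊔ g 1 := htop ▸ Submodule.mem_top
    rcases Submodule.mem_sup.mp hZ with ⟨Z0, h0, Z1, h1, rfl⟩
    exact ⟨Z0, h0, Z1, h1, rfl⟩
  have hsgn11 : sgn K 1 1 = -1 := by
    simp [sgn, ZMod.val_one]
  -- B is antisymmetric against the odd elements e, e*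
  have hanti : ∀ W : V, W ∈ g 1 → ∀ Z : V, B W Z = - B Z W := by
    intro W hW Z
    obtain ⟨Z0, h0, Z1, h1, rfl⟩ := hdecomp Z
    have e1 : B W Z0 = 0 := heven 1 0 W Z0 hW h0 (by decide)
    have e2 : B Z0 W = 0 := heven 0 1 Z0 W h0 hW (by decide)
    have e3 : B W Z1 = sgn K 1 1 * B Z1 W := hsym 1 1 W Z1 hW h1
    simp [map_add, LinearMap.add_apply, e1, e2, e3, hsgn11]
  have hBee : B e e = 0 := by
    have := hsym 1 1 e e he1 he1
    rw [hsgn11] at this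
    linear_combination this / 2
  have hBss : B estar estar = 0 := by
    have := hsym 1 1 estar estar hes1 hes1
    rw [hsgn11] at this
    linear_combination this / 2
  have hBes : B e estar = -1 := by
    rw [hanti e he1 estar, hee]
  -- everything multiplies e* to zero
  have hmules : ∀ W : V, mul W estar = 0 := by
    intro W
    apply hnd
    intro Y
    -- B (mul W estar) Y : use supersymmetry? use invariance the other way
    have h1 : B (mul W estar) Y = B W (mul estar Y) := hinv W estar Y
    rw [h1, hesz, map_zero]
  -- uniqueness of the decomposition a + c • e*
  have huniq : ∀ (a b : V) (c d : K), a ∈ N → b ∈ N →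
      a + c • estar = b + d • estar → a = b := by
    intro a b c d ha hb h
    have hae := ((hN a).mp ha).1
    have hbe := ((hN b).mp hb).1
    have hcd : c = d := by
      have := congrArg (fun W => B W e) h
      simpa [map_add, map_smul, LinearMap.add_apply, LinearMap.smul_apply,
        hae, hbe, hee] using this
    subst hcd
    exact add_right_cancel h
  ------------------------------------------------------------------
  refine ⟨?_, ?_, ?_, ?_⟩
  · -- graded skew-symmetry
    intro x y X Y hXN hYN hXg hYg
    obtain ⟨hXYN, eXY⟩ := halpha X Y hXN hYN
    obtain ⟨hYXN, eYX⟩ := halpha Y X hYN hXN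
    have h := hskew x y X Y hXg hYg
    rw [eXY, eYX] at h
    refine huniq _ _ (phi X Y) (-(sgn K x y) * phi Y X) hXYN
      (Submodule.smul_mem N _ hYXN) ?_
    calc alpha X Y + phi X Y • estar
        = -sgn K x y • (alpha Y X + phi Y X • estar) := h
      _ = -sgn K x y • alpha Y X + (-sgn K x y * phi Y X) • estar := by
          rw [smul_add, smul_smul]
  · -- graded Malcev identity
    intro x y z t X Y Z T hXN hYN hZN hTN hXg hYg hZg hTg
    -- triple products
    have htriple : ∀ P Q R S : V, P ∈ N → Q ∈ N → R ∈ N → S ∈ N →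
        ∃ c : K, mul (mul (mul P Q) R) S
          = alpha (alpha (alpha P Q) R) S + c • estar := by
      intro P Q R S hP hQ hR hS
      obtain ⟨hPQ, ePQ⟩ := halpha P Q hP hQ
      obtain ⟨hPQR, ePQR⟩ := halpha _ R hPQ hR
      obtain ⟨h3, e3⟩ := halpha _ S hPQR hS
      refine ⟨phi (alpha (alpha P Q) R) S, ?_⟩
      rw [ePQ]
      simp [map_add, map_smul, LinearMap.add_apply, LinearMap.smul_apply,
        hesz, hmules, ePQR, e3]
    have hdouble : ∀ P Q R S : V, P ∈ N → Q ∈ N → R ∈ N → S ∈ N →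
        ∃ c : K, mul (mul P Q) (mul R S)
          = alpha (alpha P Q) (alpha R S) + c • estar := by
      intro P Q R S hP hQ hR hS
      obtain ⟨hPQ, ePQ⟩ := halpha P Q hP hQ
      obtain ⟨hRS, eRS⟩ := halpha R S hR hS
      obtain ⟨hfin, efin⟩ := halpha _ _ hPQ hRS
      refine ⟨phi (alpha P Q) (alpha R S), ?_⟩
      rw [ePQ, eRS]
      simp [map_add, map_smul, LinearMap.add_apply, LinearMap.smul_apply,
        hesz, hmules, efin]
    obtain ⟨cL, eL⟩ := hdouble X Z Y T hXN hZN hYN hTN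
    obtain ⟨c1, e1⟩ := htriple X Y Z T hXN hYN hZN hTN
    obtain ⟨c2, e2⟩ := htriple Y Z T X hYN hZN hTN hXN
    obtain ⟨c3, e3⟩ := htriple Z T X Y hZN hTN hXN hYN
    obtain ⟨c4, e4⟩ := htriple T X Y Z hTN hXN hYN hZN
    have key := hmalcev x y z t X Y Z T hXg hYg hZg hTg
    rw [eL, e1, e2, e3, e4] at key
    -- memberships of the N-parts
    have m0 : alpha (alpha X Z) (alpha Y T) ∈ N := by
      have h1 := (halpha X Z hXN hZN).1
      have h2 := (halpha Y T hYN hTN).1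
      exact (halpha _ _ h1 h2).1
    have mt : ∀ P Q R S : V, P ∈ N → Q ∈ N → R ∈ N → S ∈ N →
        alpha (alpha (alpha P Q) R) S ∈ N := by
      intro P Q R S hP hQ hR hS
      exact (halpha _ _ ((halpha _ _ ((halpha _ _ hP hQ).1) hR).1) hS).1
    have m1 := mt X Y Z T hXN hYN hZN hTN
    have m2 := mt Y Z T X hYN hZN hTN hXN
    have m3 := mt Z T X Y hZN hTN hXN hYN
    have m4 := mt T X Y Z hTN hXN hYN hZN
    refine huniq _ _ (sgn K y z * cL)
      (c1 + sgn K x (y + z + t) * c2 + sgn K (x + y) (z + t) * c3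
        + sgn K t (x + y + z) * c4)
      (Submodule.smul_mem N _ m0)
      (Submodule.add_mem N (Submodule.add_mem N (Submodule.add_mem N m1
        (Submodule.smul_mem N _ m2)) (Submodule.smul_mem N _ m3))
        (Submodule.smul_mem N _ m4)) ?_
    calc sgn K y z • alpha (alpha X Z) (alpha Y T) + (sgn K y z * cL) • estar
        = sgn K y z • (alpha (alpha X Z) (alpha Y T) + cL • estar) := by
          rw [smul_add, smul_smul]
      _ = alpha (alpha (alpha X Y) Z) T + c1 • estar +
            sgn K x (y + z + t) • (alpha (alpha (alpha Y Z) T) X + c2 • estar) +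
            sgn K (x + y) (z + t) • (alpha (alpha (alpha Z T) X) Y + c3 • estar) +
            sgn K t (x + y + z) • (alpha (alpha (alpha T X) Y) Z + c4 • estar) := key
      _ = _ := by
          module
  · -- non-degeneracy on N
    intro X hX h0
    have hXe := ((hN X).mp hX).1
    have hXs := ((hN X).mp hX).2
    apply hnd
    intro Y
    set Y' := Y - (B Y e) • estar + (B Y estar) • e with hY'def
    have hY'N : Y' ∈ N := by
      rw [hN]
      constructor
      · simp [hY'def, map_add, map_sub, map_smul, LinearMap.add_apply,
          LinearMap.sub_apply, LinearMap.smul_apply, hee, hBee]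
      · simp [hY'def, map_add, map_sub, map_smul, LinearMap.add_apply,
          LinearMap.sub_apply, LinearMap.smul_apply, hBss, hBes]
    have hYY : Y = Y' + (B Y e) • estar - (B Y estar) • e := by
      rw [hY'def]; abel
    rw [hYY]
    simp [map_add, map_sub, map_smul, h0 Y' hY'N, hXe, hXs]
  · -- invariance
    intro X Y Z hX hY hZ
    obtain ⟨hXYN, eXY⟩ := halpha X Y hX hY
    obtain ⟨hYZN, eYZ⟩ := halpha Y Z hY hZ
    have hXs := ((hN X).mp hX).2
    have hZs : B estar Z = 0 := by
      rw [hanti estar hes1 Z, ((hN Z).mp hZ).2, neg_zero]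
    have h1 : B (mul X Y) Z = B (alpha X Y) Z + phi X Y * B estar Z := by
      rw [eXY]
      simp [map_add, map_smul, LinearMap.add_apply, LinearMap.smul_apply]
    have h2 : B X (mul Y Z) = B X (alpha Y Z) + phi Y Z * B X estar := by
      rw [eYZ]
      simp [map_add, map_smul]
    have := hinv X Y Z
    rw [h1, h2, hZs, hXs] at this
    simpa using this
end

section
/- If M is a Malcev superalgebra, e ∈ M_1, and N ⊆ M is a graded subspace with e orthogonal data as in Theorem 2 (N the orthogonal of Ke* ⊕ Ke, e* central), then the N-component D of X ↦ eX is a Malcev operator of N. -/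
open scoped BigOperators

/-- with `e* ∈ z(M) ∩ M₁` nonzero, `e ∈ M₁`, `B(e*,e) = 1`,
`N = (Ke* ⊕ Ke)^⊥` and `eX = D(X) + ψ(X)e*` with `D(X) ∈ N`, the `N`-component `D` of left
multiplication by `e` is a Malcev operator of `N` (whose product is the `N`-component `α`
of the product of `M`). -/
theorem stmt15 (K : Type) [Field K] [CharZero K]
    (V : Type) [AddCommGroup V] [Module K V] [FiniteDimensional K V]
    (g : ZMod 2 → Submodule K V) (mul : V →ₗ[K] V →ₗ[K] V) (B : V →ₗ[K] V →ₗ[K] K)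
    (hM : IsMalcevSuper K V g mul) (hQ : IsQuadratic K V g mul B)
    (estar : V) (hes1 : estar ∈ g 1) (hes0 : estar ≠ 0) (hesz : ∀ Y, mul estar Y = 0)
    (e : V) (he1 : e ∈ g 1) (hee : B estar e = 1)
    (N : Submodule K V) (hN : ∀ X, X ∈ N ↔ (B X e = 0 ∧ B X estar = 0))
    (alpha : V → V → V) (phi : V → V → K)
    (halpha : ∀ X Y, X ∈ N → Y ∈ N →
      alpha X Y ∈ N ∧ mul X Y = alpha X Y + phi X Y • estar)
    (D : V → V) (psi : V → K)
    (hD : ∀ X ∈ N, D X ∈ N ∧ mul e X = D X + psi X • estar) :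
    ∀ x y z X Y Z, X ∈ N → Y ∈ N → Z ∈ N → X ∈ g x → Y ∈ g y → Z ∈ g z →
      D (alpha (alpha X Y) Z) =
        alpha (alpha (D X) Y) Z - sgn K x y • alpha (D Y) (alpha X Z) -
          sgn K z (x + y) • alpha (alpha (D Z) X) Y -
          sgn K x (y + z) • alpha (D (alpha Y Z)) X := by
  obtain ⟨-, hgr, hskw, hmal⟩ := hM
  obtain ⟨-, -, hBnd, hBinv⟩ := hQ
  have h0 : ∀ W, mul W estar = 0 := by
    intro W
    apply hBnd
    intro Y
    rw [hBinv, hesz]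
    simp
  intro x y z X Y Z hXN hYN hZN hX hY hZ
  obtain ⟨hXZ_N, hXZ_eq⟩ := halpha X Z hXN hZN
  obtain ⟨hXY_N, hXY_eq⟩ := halpha X Y hXN hYN
  obtain ⟨hYZ_N, hYZ_eq⟩ := halpha Y Z hYN hZN
  obtain ⟨hDX_N, hDX_eq⟩ := hD X hXN
  obtain ⟨hDY_N, hDY_eq⟩ := hD Y hYN
  obtain ⟨hDZ_N, hDZ_eq⟩ := hD Z hZN
  obtain ⟨hAXYZ_N, hAXYZ_eq⟩ := halpha (alpha X Y) Z hXY_N hZN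
  obtain ⟨hDYZ_N, hDYZ_eq⟩ := hD (alpha Y Z) hYZ_N
  obtain ⟨hDXYZ_N, hDXYZ_eq⟩ := hD (alpha (alpha X Y) Z) hAXYZ_N
  obtain ⟨hADYZX_N, hADYZX_eq⟩ := halpha (D (alpha Y Z)) X hDYZ_N hXN
  obtain ⟨hADZX_N, hADZX_eq⟩ := halpha (D Z) X hDZ_N hXN
  obtain ⟨hAADZXY_N, hAADZXY_eq⟩ := halpha (alpha (D Z) X) Y hADZX_N hYN
  obtain ⟨hADXY_N, hADXY_eq⟩ := halpha (D X) Y hDX_N hYN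
  obtain ⟨hAADXYZ_N, hAADXYZ_eq⟩ := halpha (alpha (D X) Y) Z hADXY_N hZN
  obtain ⟨hADYXZ_N, hADYXZ_eq⟩ := halpha (D Y) (alpha X Z) hDY_N hXZ_N
  -- Malcev identity with T = e
  have hm := hmal x y z 1 X Y Z e hX hY hZ he1
  rw [hskw (x+z) (y+1) (mul X Z) (mul Y e) (hgr _ _ _ _ hX hZ) (hgr _ _ _ _ hY he1),
      hskw y 1 Y e hY he1,
      hskw (x+y+z) 1 (mul (mul X Y) Z) e (hgr _ _ _ _ (hgr _ _ _ _ hX hY) hZ) he1,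
      hskw (y+z) 1 (mul Y Z) e (hgr _ _ _ _ hY hZ) he1,
      hskw z 1 Z e hZ he1] at hm
  simp only [hXY_eq, hYZ_eq, hXZ_eq, map_add, map_smul, map_neg, LinearMap.add_apply,
    LinearMap.smul_apply, LinearMap.neg_apply, hesz, h0, smul_zero, add_zero, zero_add,
    neg_zero, hDX_eq, hDY_eq, hDZ_eq] at hm
  simp only [hAXYZ_eq, hDYZ_eq, map_add, map_smul, LinearMap.add_apply,
    LinearMap.smul_apply, hesz, h0, smul_zero, add_zero, zero_add] at hm
  simp only [hDXYZ_eq, hADYZX_eq, hADZX_eq, hADXY_eq, hADYXZ_eq, map_add, map_smul,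
    LinearMap.add_apply, LinearMap.smul_apply, hesz, h0, smul_zero, add_zero, zero_add] at hm
  simp only [hAADZXY_eq, hAADXYZ_eq, map_add, map_smul, LinearMap.add_apply,
    LinearMap.smul_apply, hesz, h0, smul_zero, add_zero, zero_add] at hm
  -- projection killing estar
  set p : V →ₗ[K] V := LinearMap.id - LinearMap.toSpanSingleton K V estar ∘ₗ B.flip e with hp
  have pN : ∀ n, n ∈ N → p n = n := by
    intro n hn
    simp [hp, LinearMap.toSpanSingleton_apply, ((hN n).mp hn).1, LinearMap.sub_apply]
  have pE : p estar = 0 := by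
    simp [hp, LinearMap.toSpanSingleton_apply, hee, LinearMap.sub_apply]
  have key := congrArg (fun v => p v) hm
  simp only [map_add, map_smul, map_neg, pE, smul_zero, add_zero, zero_add, neg_zero,
    pN _ hDXYZ_N, pN _ hADYZX_N, pN _ hAADZXY_N, pN _ hAADXYZ_N, pN _ hADYXZ_N] at key
  have hcases : ∀ a : ZMod 2, a = 0 ∨ a = 1 := by decide
  rcases hcases x with rfl | rfl <;> rcases hcases y with rfl | rfl <;>
    rcases hcases z with rfl | rfl <;>
    simp only [sgn, show ((0:ZMod 2)+0)=0 from rfl, show ((0:ZMod 2)+1)=1 from rfl,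
      show ((1:ZMod 2)+0)=1 from rfl, show ((1:ZMod 2)+1)=0 from rfl,
      ZMod.val_zero, ZMod.val_one] at key ⊢ <;>
    norm_num at key ⊢ <;>
    first
      | linear_combination (norm := module) key
      | linear_combination (norm := module) (-1:K) • key
end
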